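/- Let λ ∈ ℝ^n be dominant and ℓ := (1/n)Σ_{i=1}^n λ_i. Let S be the set of maps δ : V → ℝ such that δ((k,k)) = λ_k for all k and the tropical critical point conditions hold at every dot vertex, and let F be the set of ideal fillings for λ. For a filling {n_{ij}} and 1 ≤ i ≤ j ≤ n put H^h_{ij} := Σ_{l=j+1}^{n} n_{il} and H^v_{ij} := Σ_{l=1}^{i−1} n_{lj}. Then the map Φ : S → F defined by Φ(δ)_{ij} := π_δ((j,i)) for 1 ≤ i < j ≤ n, and the map Ψ : F → S defined by Ψ({n_{ij}})((j,i)) := H^h_{ij} − H^v_{ij} + ℓ for 1 ≤ i ≤ j ≤ n, are well-defined and mutually inverse bijections. In particular, for each dominant λ the ideal filling for λ exists and is unique. -/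

import Mathlib

noncomputable section

/-- The tropical critical point condition of the GL_n quiver at a dot vertex `(i,j)`
(so `1 ≤ j < i ≤ n`), for a decoration `δ` of the vertices by real numbers: the minimum of
the tropical values `δ(head) - δ(tail)` over the arrows with head `(i,j)` equals the
corresponding minimum over the arrows with tail `(i,j)`.  The incoming arrows are the vertical
one from `(i+1,j)` (present iff `i < n`) and the horizontal one from `(i,j+1)`; the outgoing
arrows are the vertical one to `(i-1,j)` and the horizontal one to `(i,j-1)`
(present iff `2 ≤ j`). -/
def tropCond (n : ℕ) (δ : ℕ → ℕ → ℝ) (i j : ℕ) : Prop :=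
  (if i < n then min (δ i j - δ (i + 1) j) (δ i j - δ i (j + 1)) else δ i j - δ i (j + 1))
    = if 2 ≤ j then min (δ (i - 1) j - δ i j) (δ i (j - 1) - δ i j) else δ (i - 1) j - δ i j

/-- `π((i,j))`: the minimum of the tropical values of the arrows with tail the dot vertex
`(i,j)`; when the tropical critical point condition holds at `(i,j)` this is the common
minimum over incoming resp. outgoing arrows. -/
def piFn (δ : ℕ → ℕ → ℝ) (i j : ℕ) : ℝ :=
  if 2 ≤ j then min (δ (i - 1) j - δ i j) (δ i (j - 1) - δ i j) else δ (i - 1) j - δ i j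

/-- The set `S`: decorations `δ` of the quiver vertices with `δ((k,k)) = λ_k` at the star
vertices and satisfying the tropical critical point conditions at every dot vertex. -/
def SPred (n : ℕ) (lam : ℕ → ℝ) (δ : ℕ → ℕ → ℝ) : Prop :=
  (∀ k, 1 ≤ k → k ≤ n → δ k k = lam k) ∧
    ∀ i j, 1 ≤ j → j < i → i ≤ n → tropCond n δ i j

/-- The set `F`: ideal fillings for `λ` (with `ℓ = (1/n) Σ λ_i`). -/
def FPred (n : ℕ) (lam : ℕ → ℝ) (ell : ℝ) (f : ℕ → ℕ → ℝ) : Prop :=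
  (∀ i j, 1 ≤ i → i < j → j ≤ n → 0 ≤ f i j) ∧
  (∀ i j, 1 ≤ i → i < j → j ≤ n → 2 ≤ j - i → f i j = max (f (i + 1) j) (f i (j - 1))) ∧
  (∀ k, 1 ≤ k → k ≤ n →
    (∑ j ∈ Finset.Icc (k + 1) n, f k j) - (∑ i ∈ Finset.Icc 1 (k - 1), f i k) + ell = lam k)

/-- The map `Φ : S → F`, `Φ(δ)_{ij} := π_δ((j,i))`. -/
def PhiMap (δ : ℕ → ℕ → ℝ) : ℕ → ℕ → ℝ := fun i j => piFn δ j i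

/-- The map `Ψ : F → S`, `Ψ({n_{ij}})((j,i)) := H^h_{ij} - H^v_{ij} + ℓ`, written at the
vertex with row index `a` and column index `b`. -/
def PsiMap (n : ℕ) (ell : ℝ) (f : ℕ → ℕ → ℝ) : ℕ → ℕ → ℝ :=
  fun a b => (∑ l ∈ Finset.Icc (a + 1) n, f b l) - (∑ l ∈ Finset.Icc 1 (b - 1), f l a) + ell


namespace Stmt12Aux

open Finset

lemma sum_Icc_bot (g : ℕ → ℝ) {a b : ℕ} (h : a ≤ b) :
    ∑ l ∈ Finset.Icc a b, g l = g a + ∑ l ∈ Finset.Icc (a+1) b, g l := by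
  have he : Finset.Icc a b = insert a (Finset.Icc (a+1) b) := by
    ext x; simp only [Finset.mem_Icc, Finset.mem_insert]; omega
  rw [he, Finset.sum_insert (by simp only [Finset.mem_Icc]; omega)]

lemma sum_Icc_top (g : ℕ → ℝ) {a b : ℕ} (h : a ≤ b) (hb : 1 ≤ b) :
    ∑ l ∈ Finset.Icc a b, g l = (∑ l ∈ Finset.Icc a (b-1), g l) + g b := by
  have he : Finset.Icc a b = insert b (Finset.Icc a (b-1)) := by
    ext x; simp only [Finset.mem_Icc, Finset.mem_insert]; omega
  rw [he, Finset.sum_insert (by simp only [Finset.mem_Icc]; omega)]; ring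

lemma sum_Icc_split (g : ℕ → ℝ) {a b c : ℕ} (h1 : a ≤ b+1) (h2 : b ≤ c) :
    ∑ l ∈ Finset.Icc a c, g l
      = (∑ l ∈ Finset.Icc a b, g l) + ∑ l ∈ Finset.Icc (b+1) c, g l := by
  have he : Finset.Icc a c = Finset.Icc a b ∪ Finset.Icc (b+1) c := by
    ext x; simp only [Finset.mem_Icc, Finset.mem_union]; omega
  rw [he, Finset.sum_union]
  rw [Finset.disjoint_left]
  intro x hx hx'; simp only [Finset.mem_Icc] at hx hx'; omega

/-- The max-recursion property of ideal fillings. -/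
def Hrec (n : ℕ) (f : ℕ → ℕ → ℝ) : Prop :=
  ∀ i j, 1 ≤ i → i < j → j ≤ n → 2 ≤ j - i → f i j = max (f (i + 1) j) (f i (j - 1))

variable {n : ℕ} {f : ℕ → ℕ → ℝ}

lemma mono1 (hr : Hrec n f) {i j : ℕ} (h1 : 1 ≤ i) (h2 : i+1 < j) (h3 : j ≤ n) :
    f (i+1) j ≤ f i j := by
  rw [hr i j h1 (by omega) h3 (by omega)]; exact le_max_left _ _

lemma mono2 (hr : Hrec n f) {i j : ℕ} (h1 : 1 ≤ i) (h2 : i < j) (h3 : j+1 ≤ n) :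
    f i j ≤ f i (j+1) := by
  have e := hr i (j+1) h1 (by omega) h3 (by omega)
  simp only [Nat.add_sub_cancel] at e
  rw [e]; exact le_max_right _ _

lemma chainA (hr : Hrec n f) {i j : ℕ} (h1 : 1 ≤ j) (h2 : j < i) :
    ∀ l, i+1 ≤ l → l ≤ n → f (j+1) l < f j l → f j (i+1) = f j i := by
  intro l hl
  induction l, hl using Nat.le_induction with
  | base =>
    intro hn hlt
    have e := hr j (i+1) h1 (by omega) hn (by omega)
    simp only [Nat.add_sub_cancel] at e
    rcases max_choice (f (j+1) (i+1)) (f j i) with hc | hc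
    · rw [e] at hlt ⊢; rw [hc] at hlt; linarith
    · rw [e, hc]
  | succ l hl IH =>
    intro hn hlt
    have e := hr j (l+1) h1 (by omega) hn (by omega)
    simp only [Nat.add_sub_cancel] at e
    have heq : f j (l+1) = f j l := by
      rcases max_choice (f (j+1) (l+1)) (f j l) with hc | hc
      · rw [e] at hlt ⊢; rw [hc] at hlt; linarith
      · rw [e, hc]
    have hm : f (j+1) l ≤ f (j+1) (l+1) := mono2 hr (by omega) (by omega) hn
    exact IH (by omega) (by rw [← heq]; linarith)

lemma zeroA (hr : Hrec n f) {i j : ℕ} (h2 : j < i) (h3 : i < n) (h : f j (i+1) = f j i) :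
    ∀ d l, 1 ≤ l → l + d + 1 = j → f l (i+1) = f l i := by
  intro d
  induction d with
  | zero =>
    intro l hl he
    have e := hr l (i+1) hl (by omega) (by omega) (by omega)
    simp only [Nat.add_sub_cancel] at e
    rw [show l+1 = j from by omega] at e
    rw [e, h]
    have : f j i ≤ f l i := by
      have := mono1 hr (i := l) (j := i) hl (by omega) (by omega)
      rwa [show l+1 = j from by omega] at this
    exact max_eq_right this
  | succ d IH =>
    intro l hl he
    have e := hr l (i+1) hl (by omega) (by omega) (by omega)
    simp only [Nat.add_sub_cancel] at e
    rw [e, IH (l+1) (by omega) (by omega)]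
    exact max_eq_right (mono1 hr hl (by omega) (by omega))

lemma chainC (hr : Hrec n f) {i j : ℕ} (h1 : 2 ≤ j) (h2 : j < i) (h3 : i ≤ n) :
    ∀ d l, 1 ≤ l → l + d = j - 1 → f l (i-1) < f l i → f (j-1) i = f j i := by
  intro d
  induction d with
  | zero =>
    intro l hl he hlt
    have e := hr l i hl (by omega) h3 (by omega)
    rcases max_choice (f (l+1) i) (f l (i-1)) with hc | hc
    · have hfe : f l i = f (l+1) i := by rw [e, hc]
      rw [show j-1 = l from by omega, show j = l+1 from by omega]
      exact hfe
    · rw [e, hc] at hlt; linarith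
  | succ d IH =>
    intro l hl he hlt
    have e := hr l i hl (by omega) h3 (by omega)
    have heq : f l i = f (l+1) i := by
      rcases max_choice (f (l+1) i) (f l (i-1)) with hc | hc
      · rw [e, hc]
      · rw [e, hc] at hlt; linarith
    have hm : f (l+1) (i-1) ≤ f l (i-1) := mono1 hr hl (by omega) (by omega)
    exact IH (l+1) (by omega) (by omega) (by rw [← heq]; linarith)

lemma zeroD (hr : Hrec n f) {i j : ℕ} (h1 : 2 ≤ j) (h2 : j < i) (h : f (j-1) i = f j i) :
    ∀ l, i+1 ≤ l → l ≤ n → f (j-1) l = f j l := by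
  intro l hl
  induction l, hl using Nat.le_induction with
  | base =>
    intro hn
    have e := hr (j-1) (i+1) (by omega) (by omega) hn (by omega)
    simp only [Nat.add_sub_cancel] at e
    rw [show j-1+1 = j from by omega] at e
    rw [e, h]
    exact max_eq_left (mono2 hr (by omega) h2 hn)
  | succ l hl IH =>
    intro hn
    have e := hr (j-1) (l+1) (by omega) (by omega) hn (by omega)
    simp only [Nat.add_sub_cancel] at e
    rw [show j-1+1 = j from by omega] at e
    rw [e, IH (by omega)]
    exact max_eq_left (mono2 hr (by omega) (by omega) hn)

end Stmt12Aux

namespace Stmt12Aux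

variable {n : ℕ} {f : ℕ → ℕ → ℝ}

open Finset

lemma out_min (hr : Hrec n f) {i j : ℕ} (hj : 2 ≤ j) (h2 : j < i) (h3 : i ≤ n) :
    min (f j i + ((∑ l ∈ Finset.Icc 1 (j-1), f l i) - ∑ l ∈ Finset.Icc 1 (j-1), f l (i-1)))
        (f (j-1) i + ((∑ l ∈ Finset.Icc (i+1) n, f (j-1) l) - ∑ l ∈ Finset.Icc (i+1) n, f j l))
      = f j i := by
  have hfj : f j i ≤ f (j-1) i := by
    have := mono1 hr (i := j-1) (j := i) (by omega) (by omega) h3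
    rwa [show j-1+1 = j from by omega] at this
  have hS4 : 0 ≤ (∑ l ∈ Finset.Icc (i+1) n, f (j-1) l) - ∑ l ∈ Finset.Icc (i+1) n, f j l := by
    rw [sub_nonneg]
    apply Finset.sum_le_sum
    intro l hl; simp only [Finset.mem_Icc] at hl
    have := mono1 hr (i := j-1) (j := l) (by omega) (by omega) hl.2
    rwa [show j-1+1 = j from by omega] at this
  by_cases hex : ∃ l, 1 ≤ l ∧ l ≤ j-1 ∧ f l (i-1) < f l i
  · obtain ⟨l, hl1, hl2, hlt⟩ := hex
    have key : f (j-1) i = f j i := chainC hr hj h2 h3 (j-1-l) l hl1 (by omega) hlt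
    have hDs : (∑ l ∈ Finset.Icc (i+1) n, f (j-1) l) = ∑ l ∈ Finset.Icc (i+1) n, f j l := by
      apply Finset.sum_congr rfl
      intro l hl; simp only [Finset.mem_Icc] at hl
      exact zeroD hr hj h2 key l hl.1 hl.2
    rw [hDs, sub_self, add_zero, key]
    have hS3 : 0 ≤ (∑ l ∈ Finset.Icc 1 (j-1), f l i) - ∑ l ∈ Finset.Icc 1 (j-1), f l (i-1) := by
      rw [sub_nonneg]
      apply Finset.sum_le_sum
      intro l hl; simp only [Finset.mem_Icc] at hl
      have := mono2 hr (i := l) (j := i-1) hl.1 (by omega) (by omega)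
      rwa [show i-1+1 = i from by omega] at this
    exact min_eq_right (by linarith)
  · push_neg at hex
    have hS3 : (∑ l ∈ Finset.Icc 1 (j-1), f l i) = ∑ l ∈ Finset.Icc 1 (j-1), f l (i-1) := by
      apply Finset.sum_congr rfl
      intro l hl; simp only [Finset.mem_Icc] at hl
      have hge : f l (i-1) ≤ f l i := by
        have := mono2 hr (i := l) (j := i-1) hl.1 (by omega) (by omega)
        rwa [show i-1+1 = i from by omega] at this
      have hle := hex l hl.1 hl.2
      linarith
    rw [hS3, sub_self, add_zero]
    exact min_eq_left (by linarith)

lemma in_min (hr : Hrec n f) {i j : ℕ} (hj : 1 ≤ j) (h2 : j < i) (h3 : i < n) :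
    min (f j (i+1) + ((∑ l ∈ Finset.Icc 1 (j-1), f l (i+1)) - ∑ l ∈ Finset.Icc 1 (j-1), f l i))
        (f j i + ((∑ l ∈ Finset.Icc (i+1) n, f j l) - ∑ l ∈ Finset.Icc (i+1) n, f (j+1) l))
      = f j i := by
  have hfj : f j i ≤ f j (i+1) := mono2 hr hj h2 (by omega)
  have hS2 : 0 ≤ (∑ l ∈ Finset.Icc (i+1) n, f j l) - ∑ l ∈ Finset.Icc (i+1) n, f (j+1) l := by
    rw [sub_nonneg]
    apply Finset.sum_le_sum
    intro l hl; simp only [Finset.mem_Icc] at hl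
    exact mono1 hr (i := j) (j := l) hj (by omega) hl.2
  by_cases hex : ∃ l, i+1 ≤ l ∧ l ≤ n ∧ f (j+1) l < f j l
  · obtain ⟨l, hl1, hl2, hlt⟩ := hex
    have key : f j (i+1) = f j i := chainA hr hj h2 l hl1 hl2 hlt
    have hAs : (∑ l ∈ Finset.Icc 1 (j-1), f l (i+1)) = ∑ l ∈ Finset.Icc 1 (j-1), f l i := by
      apply Finset.sum_congr rfl
      intro l hl; simp only [Finset.mem_Icc] at hl
      exact zeroA hr h2 h3 key (j-1-l) l hl.1 (by omega)
    rw [hAs, sub_self, add_zero, key]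
    exact min_eq_left (by linarith)
  · push_neg at hex
    have hS2' : (∑ l ∈ Finset.Icc (i+1) n, f j l) = ∑ l ∈ Finset.Icc (i+1) n, f (j+1) l := by
      apply Finset.sum_congr rfl
      intro l hl; simp only [Finset.mem_Icc] at hl
      have hge := mono1 hr (i := j) (j := l) hj (by omega) hl.2
      have hle := hex l hl.1 hl.2
      linarith
    rw [hS2', sub_self, add_zero]
    have hS1 : 0 ≤ (∑ l ∈ Finset.Icc 1 (j-1), f l (i+1)) - ∑ l ∈ Finset.Icc 1 (j-1), f l i := by
      rw [sub_nonneg]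
      apply Finset.sum_le_sum
      intro l hl; simp only [Finset.mem_Icc] at hl
      exact mono2 hr hl.1 (by omega) (by omega)
    exact min_eq_right (by linarith)

end Stmt12Aux

namespace Stmt12Aux

open Finset

variable {n : ℕ} {lam : ℕ → ℝ} {ell : ℝ} {f : ℕ → ℕ → ℝ}

lemma psi_diff_v (ell : ℝ) (f : ℕ → ℕ → ℝ) {a : ℕ} (b : ℕ) (h : a+1 ≤ n) :
    PsiMap n ell f a b - PsiMap n ell f (a+1) b
      = f b (a+1) + ((∑ l ∈ Finset.Icc 1 (b-1), f l (a+1)) - ∑ l ∈ Finset.Icc 1 (b-1), f l a) := by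
  unfold PsiMap
  rw [sum_Icc_bot (fun l => f b l) h]
  ring

lemma psi_diff_h (ell : ℝ) (f : ℕ → ℕ → ℝ) (a : ℕ) {b : ℕ} (hb : 1 ≤ b) :
    PsiMap n ell f a b - PsiMap n ell f a (b+1)
      = f b a + ((∑ l ∈ Finset.Icc (a+1) n, f b l) - ∑ l ∈ Finset.Icc (a+1) n, f (b+1) l) := by
  unfold PsiMap
  rw [Nat.add_sub_cancel, sum_Icc_top (fun l => f l a) hb hb]
  ring

lemma psi_SPred (hF : FPred n lam ell f) : SPred n lam (PsiMap n ell f) := by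
  obtain ⟨h0, hrec, hrow⟩ := hF
  have hr : Hrec n f := hrec
  constructor
  · intro k h1 h2
    exact hrow k h1 h2
  · intro i j hj hji hin
    unfold tropCond
    have hR : (if 2 ≤ j then
          min (PsiMap n ell f (i-1) j - PsiMap n ell f i j)
              (PsiMap n ell f i (j-1) - PsiMap n ell f i j)
        else PsiMap n ell f (i-1) j - PsiMap n ell f i j) = f j i := by
      have hd3 : PsiMap n ell f (i-1) j - PsiMap n ell f i j
          = f j i + ((∑ l ∈ Finset.Icc 1 (j-1), f l i) - ∑ l ∈ Finset.Icc 1 (j-1), f l (i-1)) := by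
        have h := psi_diff_v (n := n) ell f (a := i-1) j (by omega)
        rwa [show i-1+1 = i from by omega] at h
      by_cases h2j : 2 ≤ j
      · rw [if_pos h2j]
        have hd4 : PsiMap n ell f i (j-1) - PsiMap n ell f i j
            = f (j-1) i + ((∑ l ∈ Finset.Icc (i+1) n, f (j-1) l) - ∑ l ∈ Finset.Icc (i+1) n, f j l) := by
          have h := psi_diff_h (n := n) ell f i (b := j-1) (by omega)
          rwa [show j-1+1 = j from by omega] at h
        rw [hd3, hd4]
        exact out_min hr h2j hji hin
      · rw [if_neg h2j, hd3]
        have hj1 : j = 1 := by omega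
        subst hj1
        simp
    have hL : (if i < n then
          min (PsiMap n ell f i j - PsiMap n ell f (i+1) j)
              (PsiMap n ell f i j - PsiMap n ell f i (j+1))
        else PsiMap n ell f i j - PsiMap n ell f i (j+1)) = f j i := by
      have hd2 : PsiMap n ell f i j - PsiMap n ell f i (j+1)
          = f j i + ((∑ l ∈ Finset.Icc (i+1) n, f j l) - ∑ l ∈ Finset.Icc (i+1) n, f (j+1) l) :=
        psi_diff_h (n := n) ell f i hj
      by_cases hlt : i < n
      · rw [if_pos hlt]
        have hd1 : PsiMap n ell f i j - PsiMap n ell f (i+1) j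
            = f j (i+1) + ((∑ l ∈ Finset.Icc 1 (j-1), f l (i+1)) - ∑ l ∈ Finset.Icc 1 (j-1), f l i) :=
          psi_diff_v (n := n) ell f j (by omega)
        rw [hd1, hd2]
        exact in_min hr hj hji hlt
      · rw [if_neg hlt, hd2]
        have hi : i = n := by omega
        subst hi
        rw [Finset.Icc_eq_empty (by omega), Finset.sum_empty, Finset.sum_empty]
        ring
    rw [hL, hR]

lemma phi_psi (hF : FPred n lam ell f) (i j : ℕ) (h1 : 1 ≤ i) (h2 : i < j) (h3 : j ≤ n) :
    PhiMap (PsiMap n ell f) i j = f i j := by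
  have hr : Hrec n f := hF.2.1
  unfold PhiMap piFn
  have hd3 : PsiMap n ell f (j-1) i - PsiMap n ell f j i
      = f i j + ((∑ l ∈ Finset.Icc 1 (i-1), f l j) - ∑ l ∈ Finset.Icc 1 (i-1), f l (j-1)) := by
    have h := psi_diff_v (n := n) ell f (a := j-1) i (by omega)
    rwa [show j-1+1 = j from by omega] at h
  by_cases hi : 2 ≤ i
  · rw [if_pos hi]
    have hd4 : PsiMap n ell f j (i-1) - PsiMap n ell f j i
        = f (i-1) j + ((∑ l ∈ Finset.Icc (j+1) n, f (i-1) l) - ∑ l ∈ Finset.Icc (j+1) n, f i l) := by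
      have h := psi_diff_h (n := n) ell f j (b := i-1) (by omega)
      rwa [show i-1+1 = i from by omega] at h
    rw [hd3, hd4]
    exact out_min hr hi h2 h3
  · rw [if_neg hi, hd3]
    have hi1 : i = 1 := by omega
    subst hi1
    simp

end Stmt12Aux

namespace Stmt12Aux

open Finset

variable {n : ℕ} {lam : ℕ → ℝ}

lemma S_le (hn : 2 ≤ n) {δ δ' : ℕ → ℕ → ℝ} (hδ : SPred n lam δ) (hδ' : SPred n lam δ') :
    ∀ a b : ℕ, 1 ≤ b → b < a → a ≤ n → δ a b ≤ δ' a b := by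
  classical
  set D : Finset (ℕ × ℕ) :=
    (Finset.Icc 1 n ×ˢ Finset.Icc 1 n).filter (fun p => p.2 < p.1) with hD
  have hmemD : ∀ p : ℕ × ℕ, p ∈ D ↔ (1 ≤ p.2 ∧ p.2 < p.1 ∧ p.1 ≤ n) := by
    intro p
    simp only [hD, Finset.mem_filter, Finset.mem_product, Finset.mem_Icc]
    omega
  have hDne : D.Nonempty := ⟨(2, 1), by rw [hmemD]; omega⟩
  set ε : ℕ × ℕ → ℝ := fun p => δ p.1 p.2 - δ' p.1 p.2 with hε
  set c := D.sup' hDne ε with hc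
  rcases le_or_gt c 0 with hc0 | hc0
  · intro a b h1 h2 h3
    have := Finset.le_sup' ε ((hmemD (a, b)).2 ⟨h1, h2, h3⟩)
    have : ε (a, b) ≤ c := this
    simp only [hε] at this
    linarith
  · exfalso
    set A := D.filter (fun p => ε p = c) with hA
    have hAne : A.Nonempty := by
      obtain ⟨v, hvD, hvc⟩ := Finset.exists_mem_eq_sup' hDne ε
      exact ⟨v, Finset.mem_filter.2 ⟨hvD, hvc.symm⟩⟩
    obtain ⟨w, hwA, hwmin⟩ := Finset.exists_min_image A (fun p => p.1 + 2 * p.2) hAne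
    obtain ⟨hwD, hwc⟩ := Finset.mem_filter.1 hwA
    obtain ⟨i, j⟩ := w
    rw [hmemD] at hwD
    obtain ⟨hj1, hji, hin⟩ := hwD
    have hj1 : 1 ≤ j := hj1
    have hji : j < i := hji
    have hin : i ≤ n := hin
    have hwmin : ∀ x ∈ A, i + 2 * j ≤ x.1 + 2 * x.2 := hwmin
    simp only [hε] at hwc
    -- hwc : δ i j - δ' i j = c
    have hstar : ∀ k, 1 ≤ k → k ≤ n → δ k k = δ' k k := by
      intro k h1 h2; rw [hδ.1 k h1 h2, hδ'.1 k h1 h2]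
    have hble : ∀ a b : ℕ, 1 ≤ b → b < a → a ≤ n → δ a b - δ' a b ≤ c := by
      intro a b h1 h2 h3
      exact Finset.le_sup' ε ((hmemD (a, b)).2 ⟨h1, h2, h3⟩)
    have hblt : ∀ a b : ℕ, 1 ≤ b → b < a → a ≤ n → a + 2 * b < i + 2 * j →
        δ a b - δ' a b < c := by
      intro a b h1 h2 h3 h4
      rcases lt_or_eq_of_le (hble a b h1 h2 h3) with h | h
      · exact h
      · exfalso
        have hmem : (a, b) ∈ A := Finset.mem_filter.2 ⟨(hmemD (a, b)).2 ⟨h1, h2, h3⟩, h⟩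
        have := hwmin (a, b) hmem
        simp only at this
        omega
    -- tail bounds
    have ht2 : δ i (j+1) ≤ δ' i (j+1) + c := by
      rcases eq_or_lt_of_le (show j + 1 ≤ i from hji) with h | h
      · rw [← h, hstar (j+1) (by omega) (by omega)]
        linarith
      · have := hble i (j+1) (by omega) h hin
        linarith
    -- head bounds (strict)
    have hh1 : δ (i-1) j - δ' (i-1) j < c := by
      rcases eq_or_lt_of_le (show j ≤ i - 1 from by omega) with h | h
      · rw [h, hstar (i-1) (by omega) (by omega)]
        linarith
      · exact hblt (i-1) j hj1 h (by omega) (by omega)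
    -- the two tropical conditions
    have e := hδ.2 i j hj1 hji hin
    have e' := hδ'.2 i j hj1 hji hin
    unfold tropCond at e e'
    -- compare
    have hLle : (if i < n then
          min (δ' i j - δ' (i+1) j) (δ' i j - δ' i (j+1)) else δ' i j - δ' i (j+1))
        ≤ (if i < n then
          min (δ i j - δ (i+1) j) (δ i j - δ i (j+1)) else δ i j - δ i (j+1)) := by
      by_cases hiN : i < n
      · rw [if_pos hiN, if_pos hiN]
        have ht1 : δ (i+1) j ≤ δ' (i+1) j + c := by
          have := hble (i+1) j hj1 (by omega) (by omega)
          linarith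
        apply le_min
        · have := min_le_left (δ' i j - δ' (i+1) j) (δ' i j - δ' i (j+1))
          linarith
        · have := min_le_right (δ' i j - δ' (i+1) j) (δ' i j - δ' i (j+1))
          linarith
      · rw [if_neg hiN, if_neg hiN]
        linarith
    have hRlt : (if 2 ≤ j then
          min (δ (i-1) j - δ i j) (δ i (j-1) - δ i j) else δ (i-1) j - δ i j)
        < (if 2 ≤ j then
          min (δ' (i-1) j - δ' i j) (δ' i (j-1) - δ' i j) else δ' (i-1) j - δ' i j) := by
      by_cases h2j : 2 ≤ j
      · rw [if_pos h2j, if_pos h2j]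
        have hh2 : δ i (j-1) - δ' i (j-1) < c :=
          hblt i (j-1) (by omega) (by omega) hin (by omega)
        rcases le_total (δ' (i-1) j - δ' i j) (δ' i (j-1) - δ' i j) with h | h
        · rw [min_eq_left h]
          have := min_le_left (δ (i-1) j - δ i j) (δ i (j-1) - δ i j)
          linarith
        · rw [min_eq_right h]
          have := min_le_right (δ (i-1) j - δ i j) (δ i (j-1) - δ i j)
          linarith
      · rw [if_neg h2j, if_neg h2j]
        linarith
    rw [e] at hLle
    rw [← e'] at hRlt
    linarith

lemma S_eq (hn : 2 ≤ n) {δ δ' : ℕ → ℕ → ℝ} (hδ : SPred n lam δ) (hδ' : SPred n lam δ') :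
    ∀ a b : ℕ, 1 ≤ b → b ≤ a → a ≤ n → δ a b = δ' a b := by
  intro a b h1 h2 h3
  rcases eq_or_lt_of_le h2 with h | h
  · rw [h, hδ.1 a (by omega) h3, hδ'.1 a (by omega) h3]
  · exact le_antisymm (S_le hn hδ hδ' a b h1 h h3) (S_le hn hδ' hδ a b h1 h h3)

end Stmt12Aux

namespace Stmt12Aux

open Finset

/-- Sum of `lam` over `[p,q]`. -/
def TT (lam : ℕ → ℝ) (p q : ℕ) : ℝ := ∑ l ∈ Finset.Icc p q, lam l

/-- Mean of `lam` over `[p,q]`. -/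
def Mn (lam : ℕ → ℝ) (p q : ℕ) : ℝ := TT lam p q / ((q : ℝ) - p + 1)

set_option maxHeartbeats 1000000 in
lemma build (lam : ℕ → ℝ) : ∀ d p q : ℕ, q - p = d → 1 ≤ p → p ≤ q →
    (∀ a b, p ≤ a → a ≤ b → b ≤ q → lam b ≤ lam a) →
    ∃ f : ℕ → ℕ → ℝ,
      (∀ i j, p ≤ i → i < j → j ≤ q → 0 ≤ f i j) ∧
      (∀ i j, p ≤ i → i < j → j ≤ q → 2 ≤ j - i → f i j = max (f (i+1) j) (f i (j-1))) ∧
      (∀ K : ℝ, (∀ k, p ≤ k → k < q → (Mn lam p k - Mn lam p q) / ((q:ℝ) - k) ≤ K) →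
        ∀ i j, p ≤ i → i < j → j ≤ q → f i j ≤ K) ∧
      (∀ k, p ≤ k → k ≤ q →
        (∑ j ∈ Finset.Icc (k+1) q, f k j) - (∑ i ∈ Finset.Icc p (k-1), f i k)
          + Mn lam p q = lam k) := by
  intro d
  induction d using Nat.strong_induction_on with
  | _ d IH =>
  intro p q hd hp hpq hdomq
  rcases eq_or_lt_of_le hpq with heq | hlt
  · -- base case p = q
    subst heq
    refine ⟨fun _ _ => 0, ?_, ?_, ?_, ?_⟩
    · intro i j h1 h2 h3; exact absurd h2 (by omega)
    · intro i j h1 h2 h3 _; exact absurd h2 (by omega)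
    · intro K _ i j h1 h2 h3; exact absurd h2 (by omega)
    · intro k hk1 hk2
      have hk : k = p := by omega
      subst hk
      rw [Finset.Icc_eq_empty (by omega), Finset.Icc_eq_empty (by omega)]
      simp only [Finset.sum_empty]
      unfold Mn TT
      rw [Finset.Icc_self, Finset.sum_singleton,
        show ((k:ℝ) - k + 1) = 1 by ring, div_one]
      ring
  · -- inductive case p < q
    obtain ⟨m, hmI, hmax⟩ := Finset.exists_max_image (Finset.Ico p q)
        (fun k => (Mn lam p k - Mn lam p q) / ((q:ℝ) - k))
        ⟨p, by simp only [Finset.mem_Ico]; omega⟩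
    simp only [Finset.mem_Ico] at hmI
    obtain ⟨hpm, hmq⟩ := hmI
    set A := (Mn lam p m - Mn lam p q) / ((q:ℝ) - m) with hA
    obtain ⟨f₁, h₁0, h₁rec, h₁bd, h₁row⟩ :=
      IH (m - p) (by omega) p m rfl hp hpm
        (fun a b ha hab hbq => hdomq a b ha hab (by omega))
    obtain ⟨f₂, h₂0, h₂rec, h₂bd, h₂row⟩ :=
      IH (q - (m+1)) (by omega) (m+1) q rfl (by omega) (by omega)
        (fun a b ha hab hbq => hdomq a b (by omega) hab hbq)
    -- basic positivity of cast differences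
    have hq0 : (0:ℝ) < (q:ℝ) - m := by
      have : (m:ℝ) < q := by exact_mod_cast hmq
      linarith
    have hνpos : (0:ℝ) < (q:ℝ) - p + 1 := by
      have : (p:ℝ) ≤ q := by exact_mod_cast hpq
      linarith
    have hβpos : (0:ℝ) < (m:ℝ) - p + 1 := by
      have : (p:ℝ) ≤ m := by exact_mod_cast hpm
      linarith
    have hsplitT : TT lam p q = TT lam p m + TT lam (m+1) q := by
      unfold TT; exact sum_Icc_split lam (by omega) (by omega)
    -- mean comparison (uses dominance)
    have hlam_m : ((m:ℝ) - p + 1) * lam m ≤ TT lam p m := by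
      have h := Finset.sum_le_sum (f := fun _ => lam m) (g := lam)
        (s := Finset.Icc p m)
        (fun l hl => by
          simp only [Finset.mem_Icc] at hl
          exact hdomq l m hl.1 hl.2 (by omega))
      rw [Finset.sum_const, Nat.card_Icc, nsmul_eq_mul] at h
      have hc : ((m + 1 - p : ℕ) : ℝ) = (m:ℝ) - p + 1 := by
        rw [Nat.cast_sub (by omega)]; push_cast; ring
      rw [hc] at h
      exact h
    have hbot_le : TT lam (m+1) q ≤ ((q:ℝ) - m) * lam m := by
      have h := Finset.sum_le_sum (f := lam) (g := fun _ => lam m)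
        (s := Finset.Icc (m+1) q)
        (fun l hl => by
          simp only [Finset.mem_Icc] at hl
          exact hdomq m l hpm (by omega) hl.2)
      rw [Finset.sum_const, Nat.card_Icc, nsmul_eq_mul] at h
      have hc : ((q + 1 - (m + 1) : ℕ) : ℝ) = (q:ℝ) - m := by
        rw [Nat.cast_sub (by omega)]; push_cast; ring
      rw [hc] at h
      exact h
    have hlm : lam m ≤ Mn lam p m := by
      rw [Mn, le_div_iff₀ hβpos]
      linarith
    have hmean : Mn lam p q ≤ Mn lam p m := by
      rw [Mn, div_le_iff₀ hνpos]
      have h2 := mul_le_mul_of_nonneg_left hlm hq0.le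
      have h1 : TT lam p m = Mn lam p m * ((m:ℝ) - p + 1) := by
        rw [Mn]; field_simp
      have hr : Mn lam p m * ((m:ℝ) - p + 1) + ((q:ℝ) - m) * Mn lam p m
          = Mn lam p m * ((q:ℝ) - p + 1) := by ring
      linarith [hsplitT, hbot_le]
    have hA0 : (0:ℝ) ≤ A := div_nonneg (by linarith) hq0.le
    have hAq : ((q:ℝ) - m) * A = Mn lam p m - Mn lam p q := by
      rw [hA, mul_comm, div_mul_cancel₀ _ (ne_of_gt hq0)]
    have hAtop : ((q:ℝ) - m) * A + Mn lam p q = Mn lam p m := by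
      rw [hAq]; ring
    have e1 : Mn lam (m+1) q = (TT lam p q - TT lam p m) / ((q:ℝ) - m) := by
      rw [Mn, show ((q:ℝ) - ↑(m+1) + 1) = (q:ℝ) - m by push_cast; ring, hsplitT]
      ring_nf
    have hAbot : Mn lam p q - ((m:ℝ) - p + 1) * A = Mn lam (m+1) q := by
      rw [e1, hA, Mn, Mn]
      field_simp
      ring
    -- hull lemma 1
    have hull1 : ∀ k, p ≤ k → k < m → (Mn lam p k - Mn lam p m) / ((m:ℝ) - k) ≤ A := by
      intro k hk1 hk2
      have hmk : (0:ℝ) < (m:ℝ) - k := by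
        have : (k:ℝ) < m := by exact_mod_cast hk2
        linarith
      have hqk : (0:ℝ) < (q:ℝ) - k := by
        have : (k:ℝ) < q := by exact_mod_cast (lt_trans hk2 hmq)
        linarith
      have hmx := hmax k (by simp only [Finset.mem_Ico]; omega)
      rw [hA] at hmx ⊢
      rw [div_le_div_iff₀ hqk hq0] at hmx
      rw [div_le_div_iff₀ hmk hq0]
      linarith [hmx]
    -- hull lemma 2
    have hull2 : ∀ k, m < k → k < q →
        (Mn lam (m+1) k - Mn lam (m+1) q) / ((q:ℝ) - k) ≤ A := by
      intro k hk1 hk2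
      have hkm : (0:ℝ) < (k:ℝ) - m := by
        have : (m:ℝ) < k := by exact_mod_cast hk1
        linarith
      have hqk : (0:ℝ) < (q:ℝ) - k := by
        have : (k:ℝ) < q := by exact_mod_cast hk2
        linarith
      have hαpos : (0:ℝ) < (k:ℝ) - p + 1 := by
        have : (p:ℝ) ≤ k := by exact_mod_cast (le_trans hpm (le_of_lt hk1))
        linarith
      have hsplitk : TT lam p k = TT lam p m + TT lam (m+1) k := by
        unfold TT; exact sum_Icc_split lam (by omega) (by omega)
      have e2 : Mn lam (m+1) k = (TT lam p k - TT lam p m) / ((k:ℝ) - m) := by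
        rw [Mn, show ((k:ℝ) - ↑(m+1) + 1) = (k:ℝ) - m by push_cast; ring, hsplitk]
        ring_nf
      set u := Mn lam p k - Mn lam p q with hu_def
      set v := Mn lam p m - Mn lam p q with hv_def
      have hx : TT lam p k = ((k:ℝ) - p + 1) * Mn lam p k := by rw [Mn]; field_simp
      have hy : TT lam p m = ((m:ℝ) - p + 1) * Mn lam p m := by rw [Mn]; field_simp
      have hz : TT lam p q = ((q:ℝ) - p + 1) * Mn lam p q := by rw [Mn]; field_simp
      have hMk : Mn lam p k = Mn lam p q + u := by rw [hu_def]; ring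
      have hMm : Mn lam p m = Mn lam p q + v := by rw [hv_def]; ring
      have hmx := hmax k (by simp only [Finset.mem_Ico]; omega)
      rw [hA] at hmx
      rw [div_le_div_iff₀ hqk hq0] at hmx
      rw [← hu_def] at hmx
      -- hmx : u * ((q:ℝ) - m) ≤ v * ((q:ℝ) - k)
      have hid : Mn lam (m+1) k - Mn lam (m+1) q
          = (((k:ℝ) - p + 1) * u - ((m:ℝ) - p + 1) * v) / ((k:ℝ) - m)
            + ((m:ℝ) - p + 1) * v / ((q:ℝ) - m) := by
        rw [e2, e1, hx, hy, hz, hMk, hMm]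
        field_simp
        ring
      rw [hA, hid, div_le_div_iff₀ hqk hq0]
      have e5 : ((((k:ℝ) - p + 1) * u - ((m:ℝ) - p + 1) * v) / ((k:ℝ) - m)
            + ((m:ℝ) - p + 1) * v / ((q:ℝ) - m)) * ((q:ℝ) - m)
          = (((k:ℝ) - p + 1) * u - ((m:ℝ) - p + 1) * v) * ((q:ℝ) - m) / ((k:ℝ) - m)
            + ((m:ℝ) - p + 1) * v := by
        field_simp
      rw [e5, div_add' _ _ _ (ne_of_gt hkm), div_le_iff₀ hkm]
      linarith [mul_le_mul_of_nonneg_left hmx hαpos.le]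
    -- the filling
    set F : ℕ → ℕ → ℝ :=
      fun i j => if i ≤ m ∧ m < j then A else if j ≤ m then f₁ i j else f₂ i j with hFdef
    have hfcross : ∀ i j, i ≤ m → m < j → F i j = A := by
      intro i j h1 h2
      show (if i ≤ m ∧ m < j then A else if j ≤ m then f₁ i j else f₂ i j) = A
      rw [if_pos ⟨h1, h2⟩]
    have hftop : ∀ i j, j ≤ m → F i j = f₁ i j := by
      intro i j h1
      show (if i ≤ m ∧ m < j then A else if j ≤ m then f₁ i j else f₂ i j) = f₁ i j
      rw [if_neg (by omega), if_pos h1]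
    have hfbot : ∀ i j, m < i → m < j → F i j = f₂ i j := by
      intro i j h1 h2
      show (if i ≤ m ∧ m < j then A else if j ≤ m then f₁ i j else f₂ i j) = f₂ i j
      rw [if_neg (by omega), if_neg (by omega)]
    refine ⟨F, ?_, ?_, ?_, ?_⟩
    · -- nonneg
      intro i j h1 h2 h3
      rcases le_or_gt j m with hjm | hmj
      · rw [hftop i j hjm]; exact h₁0 i j h1 h2 hjm
      · rcases le_or_gt i m with him | hmi
        · rw [hfcross i j him hmj]; exact hA0
        · rw [hfbot i j hmi hmj]; exact h₂0 i j (by omega) h2 h3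
    · -- recursion
      intro i j h1 h2 h3 h4
      rcases le_or_gt j m with hjm | hmj
      · rw [hftop i j hjm, hftop (i+1) j hjm, hftop i (j-1) (by omega)]
        exact h₁rec i j h1 h2 hjm h4
      · rcases le_or_gt i m with him | hmi
        · rw [hfcross i j him hmj]
          rcases lt_or_eq_of_le him with hlt1 | heq1
          · rw [hfcross (i+1) j (by omega) hmj]
            rcases lt_or_eq_of_le (show m ≤ j - 1 from by omega) with h5 | h5
            · rw [hfcross i (j-1) him h5, max_self]
            · rw [hftop i (j-1) (by omega)]
              have hb : f₁ i (j-1) ≤ A := h₁bd A hull1 i (j-1) h1 (by omega) (by omega)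
              exact (max_eq_left hb).symm
          · rw [hfbot (i+1) j (by omega) hmj]
            have hb : f₂ (i+1) j ≤ A :=
              h₂bd A (fun k hk1 hk2 => hull2 k (by omega) hk2) (i+1) j (by omega)
                (by omega) h3
            rw [hfcross i (j-1) him (by omega)]
            exact (max_eq_right hb).symm
        · rw [hfbot i j hmi hmj, hfbot (i+1) j (by omega) hmj, hfbot i (j-1) hmi (by omega)]
          exact h₂rec i j (by omega) h2 h3 h4
    · -- bound
      intro K hK i j h1 h2 h3
      have hAK : A ≤ K := hK m hpm hmq
      rcases le_or_gt j m with hjm | hmj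
      · rw [hftop i j hjm]
        exact h₁bd K (fun k hk1 hk2 => le_trans (hull1 k hk1 hk2) hAK) i j h1 h2 hjm
      · rcases le_or_gt i m with him | hmi
        · rw [hfcross i j him hmj]; exact hAK
        · rw [hfbot i j hmi hmj]
          exact h₂bd K (fun k hk1 hk2 => le_trans (hull2 k (by omega) hk2) hAK) i j
            (by omega) h2 h3
    · -- row sums
      intro k hk1 hk2
      rcases le_or_gt k m with hkm | hmk
      · have hsp : (∑ j ∈ Finset.Icc (k+1) q, F k j)
            = (∑ j ∈ Finset.Icc (k+1) m, f₁ k j) + ((q:ℝ) - m) * A := by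
          rw [sum_Icc_split (fun j => F k j) (by omega : k+1 ≤ m+1) (by omega : m ≤ q)]
          congr 1
          · exact Finset.sum_congr rfl fun j hj => by
              simp only [Finset.mem_Icc] at hj; exact hftop k j hj.2
          · rw [Finset.sum_congr rfl fun j hj => by
              simp only [Finset.mem_Icc] at hj; exact hfcross k j hkm hj.1]
            rw [Finset.sum_const, Nat.card_Icc, nsmul_eq_mul]
            congr 1
            rw [Nat.cast_sub (by omega)]; push_cast; ring
        have hcol : (∑ i ∈ Finset.Icc p (k-1), F i k) = ∑ i ∈ Finset.Icc p (k-1), f₁ i k :=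
          Finset.sum_congr rfl fun i hi => by
            simp only [Finset.mem_Icc] at hi; exact hftop i k hkm
        rw [hsp, hcol]
        have hr1 := h₁row k hk1 hkm
        linarith [hAtop]
      · have hsp : (∑ j ∈ Finset.Icc (k+1) q, F k j) = ∑ j ∈ Finset.Icc (k+1) q, f₂ k j :=
          Finset.sum_congr rfl fun j hj => by
            simp only [Finset.mem_Icc] at hj; exact hfbot k j hmk (by omega)
        have hcol : (∑ i ∈ Finset.Icc p (k-1), F i k)
            = ((m:ℝ) - p + 1) * A + ∑ i ∈ Finset.Icc (m+1) (k-1), f₂ i k := by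
          rw [sum_Icc_split (fun i => F i k) (by omega : p ≤ m+1) (by omega : m ≤ k-1)]
          congr 1
          · rw [Finset.sum_congr rfl fun i hi => by
              simp only [Finset.mem_Icc] at hi; exact hfcross i k hi.2 hmk]
            rw [Finset.sum_const, Nat.card_Icc, nsmul_eq_mul]
            congr 1
            rw [Nat.cast_sub (by omega)]; push_cast; ring
          · exact Finset.sum_congr rfl fun i hi => by
              simp only [Finset.mem_Icc] at hi; exact hfbot i k (by omega) hmk
        rw [hsp, hcol]
        have hr2 := h₂row k (by omega) hk2
        linarith [hAbot]

end Stmt12Aux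

namespace Stmt12Aux

lemma lam_anti {n : ℕ} {lam : ℕ → ℝ}
    (hdom : ∀ i, 1 ≤ i → i + 1 ≤ n → lam (i + 1) ≤ lam i) :
    ∀ a b, 1 ≤ a → a ≤ b → b ≤ n → lam b ≤ lam a := by
  intro a b ha hab
  induction b, hab using Nat.le_induction with
  | base => exact fun _ => le_refl _
  | succ b hb IHb => exact fun hbn => le_trans (hdom b (by omega) hbn) (IHb (by omega))

lemma FPred_congr {n : ℕ} {lam : ℕ → ℝ} {ell : ℝ} {f g : ℕ → ℕ → ℝ}
    (heq : ∀ i j, 1 ≤ i → i < j → j ≤ n → g i j = f i j) (hF : FPred n lam ell f) :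
    FPred n lam ell g := by
  obtain ⟨h0, h1, h2⟩ := hF
  refine ⟨?_, ?_, ?_⟩
  · intro i j a b c; rw [heq i j a b c]; exact h0 i j a b c
  · intro i j a b c d
    rw [heq i j a b c, heq (i+1) j (by omega) (by omega) c,
      heq i (j-1) a (by omega) (by omega)]
    exact h1 i j a b c d
  · intro k a b
    have e1 : ∑ j ∈ Finset.Icc (k+1) n, g k j = ∑ j ∈ Finset.Icc (k+1) n, f k j :=
      Finset.sum_congr rfl (fun j hj => by
        simp only [Finset.mem_Icc] at hj; exact heq k j a (by omega) hj.2)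
    have e2 : ∑ i ∈ Finset.Icc 1 (k-1), g i k = ∑ i ∈ Finset.Icc 1 (k-1), f i k :=
      Finset.sum_congr rfl (fun i hi => by
        simp only [Finset.mem_Icc] at hi; exact heq i k hi.1 (by omega) b)
    rw [e1, e2]
    exact h2 k a b

end Stmt12Aux


theorem stmt12 (n : ℕ) (hn : 2 ≤ n) (lam : ℕ → ℝ)
    (hdom : ∀ i, 1 ≤ i → i + 1 ≤ n → lam (i + 1) ≤ lam i)
    (ell : ℝ) (hell : ell = (∑ i ∈ Finset.Icc 1 n, lam i) / n) :
    -- Φ is well defined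
    (∀ δ, SPred n lam δ → FPred n lam ell (PhiMap δ)) ∧
    -- Ψ is well defined
    (∀ f, FPred n lam ell f → SPred n lam (PsiMap n ell f)) ∧
    -- Ψ ∘ Φ = id (on the quiver vertices)
    (∀ δ, SPred n lam δ →
      ∀ i j, 1 ≤ j → j ≤ i → i ≤ n → PsiMap n ell (PhiMap δ) i j = δ i j) ∧
    -- Φ ∘ Ψ = id (on the index pairs of fillings)
    (∀ f, FPred n lam ell f →
      ∀ i j, 1 ≤ i → i < j → j ≤ n → PhiMap (PsiMap n ell f) i j = f i j) ∧
    -- in particular the ideal filling for λ exists and is unique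
    (∃ f, FPred n lam ell f ∧ ∀ g, FPred n lam ell g →
      ∀ i j, 1 ≤ i → i < j → j ≤ n → g i j = f i j) := by
  classical
  obtain ⟨f₀, h₀0, h₀rec, h₀bd, h₀row⟩ :=
    Stmt12Aux.build lam (n - 1) 1 n rfl (le_refl 1) (by omega) (Stmt12Aux.lam_anti hdom)
  have hMn : Stmt12Aux.Mn lam 1 n = ell := by
    rw [hell]
    unfold Stmt12Aux.Mn Stmt12Aux.TT
    congr 1
    push_cast
    ring
  have hF0 : FPred n lam ell f₀ := by
    refine ⟨h₀0, h₀rec, ?_⟩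
    intro k h1 h2
    have h := h₀row k h1 h2
    rwa [hMn] at h
  have hS0 : SPred n lam (PsiMap n ell f₀) := Stmt12Aux.psi_SPred hF0
  have phi_eq : ∀ δ, SPred n lam δ →
      ∀ i j, 1 ≤ i → i < j → j ≤ n → PhiMap δ i j = f₀ i j := by
    intro δ hδ i j h1 h2 h3
    have hveq := Stmt12Aux.S_eq hn hδ hS0
    have he : PhiMap δ i j = PhiMap (PsiMap n ell f₀) i j := by
      unfold PhiMap piFn
      by_cases hi : 2 ≤ i
      · rw [if_pos hi, if_pos hi,
          hveq (j-1) i h1 (by omega) (by omega), hveq j i h1 (by omega) h3,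
          hveq j (i-1) (by omega) (by omega) h3]
      · rw [if_neg hi, if_neg hi, hveq (j-1) i h1 (by omega) (by omega),
          hveq j i h1 (by omega) h3]
    rw [he]
    exact Stmt12Aux.phi_psi hF0 i j h1 h2 h3
  refine ⟨?_, fun f hf => Stmt12Aux.psi_SPred hf, ?_,
    fun f hf i j h1 h2 h3 => Stmt12Aux.phi_psi hf i j h1 h2 h3, ?_⟩
  · intro δ hδ
    exact Stmt12Aux.FPred_congr (phi_eq δ hδ) hF0
  · intro δ hδ i j h1 h2 h3
    have e1 : PsiMap n ell (PhiMap δ) i j = PsiMap n ell f₀ i j := by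
      unfold PsiMap
      have e2 : ∑ l ∈ Finset.Icc (i+1) n, PhiMap δ j l
          = ∑ l ∈ Finset.Icc (i+1) n, f₀ j l :=
        Finset.sum_congr rfl (fun l hl => by
          simp only [Finset.mem_Icc] at hl
          exact phi_eq δ hδ j l h1 (by omega) hl.2)
      have e3 : ∑ l ∈ Finset.Icc 1 (j-1), PhiMap δ l i
          = ∑ l ∈ Finset.Icc 1 (j-1), f₀ l i :=
        Finset.sum_congr rfl (fun l hl => by
          simp only [Finset.mem_Icc] at hl
          exact phi_eq δ hδ l i hl.1 (by omega) h3)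
      rw [e2, e3]
    rw [e1]
    exact (Stmt12Aux.S_eq hn hδ hS0 i j h1 h2 h3).symm
  · refine ⟨f₀, hF0, ?_⟩
    intro g hg i j h1 h2 h3
    have hSg := Stmt12Aux.psi_SPred hg
    rw [(Stmt12Aux.phi_psi hg i j h1 h2 h3).symm]
    exact phi_eq (PsiMap n ell g) hSg i j h1 h2 h3
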